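/- Let H and G be finite simple graphs and α an integer. If H is a minor of G, then αprune(H) is a minor of αprune(G). -/

import Mathlib

/-- An `H`-model in `G`: branch sets `φ v ⊆ V(G)` inducing connected subgraphs,
pairwise disjoint, with an edge of `G` between the branch sets of adjacent vertices of `H`. -/
def IsMinorModel {V W : Type*} (G : SimpleGraph V) (H : SimpleGraph W)
    (φ : W → Set V) : Prop :=
  (∀ v : W, (G.induce (φ v)).Connected) ∧
  (∀ u v : W, H.Adj u v → ∃ u' ∈ φ u, ∃ v' ∈ φ v, G.Adj u' v') ∧
  (∀ u v : W, u ≠ v → Disjoint (φ u) (φ v))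

/-- `H` is a minor of `G` (`H ⪯ G`) if an `H`-model in `G` exists. -/
def IsMinorOf {V W : Type*} (H : SimpleGraph W) (G : SimpleGraph V) : Prop :=
  ∃ φ : W → Set V, IsMinorModel G H φ

/-- A graph is `α`-robust when it has at least `α` vertices and no vertex `v` exists
such that deleting `v` leaves a connected component with fewer than `α - 1` vertices. -/
def IsRobustGraph {V : Type*} (G : SimpleGraph V) (α : ℤ) : Prop :=
  α ≤ ((Set.univ : Set V).ncard : ℤ) ∧
  ∀ v : V, ∀ C : (G.induce {u | u ≠ v}).ConnectedComponent,
    α - 1 ≤ (C.supp.ncard : ℤ)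

/-- The vertex set of `αprune(G)`: the union of all vertex sets `A` for which
`G[A]` is `α`-robust. -/
def pruneSet {V : Type*} (G : SimpleGraph V) (α : ℤ) : Set V :=
  {v | ∃ A : Set V, IsRobustGraph (G.induce A) α ∧ v ∈ A}

/-- `αprune(G)`: the unique maximal `α`-robust subgraph of `G` (empty if none exists). -/
def prune {V : Type*} (G : SimpleGraph V) (α : ℤ) : SimpleGraph (pruneSet G α) :=
  G.induce (pruneSet G α)


section Aux

open SimpleGraph

variable {V : Type*}




/-- Adjacency restricted to a set. -/
def Rrel (G : SimpleGraph V) (T : Set V) (a b : V) : Prop := a ∈ T ∧ b ∈ T ∧ G.Adj a b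

/-- Reachability within a set. -/
def RReach (G : SimpleGraph V) (T : Set V) : V → V → Prop := Relation.ReflTransGen (Rrel G T)

lemma Rrel.symm' {G : SimpleGraph V} {T : Set V} {a b : V} (h : Rrel G T a b) : Rrel G T b a :=
  ⟨h.2.1, h.1, h.2.2.symm⟩

lemma RReach.symm' {G : SimpleGraph V} {T : Set V} {a b : V} (h : RReach G T a b) :
    RReach G T b a :=
  by
    induction h with
    | refl => exact Relation.ReflTransGen.refl
    | tail _ hr ih => exact Relation.ReflTransGen.head hr.symm' ih

lemma RReach.mono {G : SimpleGraph V} {T T' : Set V} (hT : T ⊆ T') {a b : V}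
    (h : RReach G T a b) : RReach G T' a b :=
  by
    induction h with
    | refl => exact Relation.ReflTransGen.refl
    | tail _ hr ih => exact Relation.ReflTransGen.tail ih ⟨hT hr.1, hT hr.2.1, hr.2.2⟩

/-- The connected component of `y` within `T`. -/
def Rcomp (G : SimpleGraph V) (T : Set V) (y : V) : Set V := {z | RReach G T y z}

lemma self_mem_Rcomp (G : SimpleGraph V) (T : Set V) (y : V) : y ∈ Rcomp G T y :=
  Relation.ReflTransGen.refl

lemma Rcomp_subset {G : SimpleGraph V} {T : Set V} {y : V} (hy : y ∈ T) :
    Rcomp G T y ⊆ T := by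
  intro z hz
  rcases Relation.ReflTransGen.cases_tail hz with h | ⟨c, _, hc⟩
  · rwa [h]
  · exact hc.2.1

lemma Rcomp_closed {G : SimpleGraph V} {T : Set V} {y z w : V} (hz : z ∈ Rcomp G T y)
    (h : Rrel G T z w) : w ∈ Rcomp G T y :=
  Relation.ReflTransGen.tail hz h

lemma Rcomp_mono {G : SimpleGraph V} {T T' : Set V} (hT : T ⊆ T') (y : V) :
    Rcomp G T y ⊆ Rcomp G T' y := fun _ hz => hz.mono hT

/-- Reachability in an induced subgraph is reachability within the set. -/
lemma reach_induce_iff {G : SimpleGraph V} {B : Set V} (a b : B) :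
    (G.induce B).Reachable a b ↔ RReach G B a b := by
  constructor
  · rintro ⟨w⟩
    induction w with
    | nil => exact Relation.ReflTransGen.refl
    | cons h _ ih =>
      exact Relation.ReflTransGen.head ⟨Subtype.coe_prop _, Subtype.coe_prop _, h⟩ ih
  · intro h
    have key : ∀ z (hz : RReach G B (a : V) z), ∀ hzB : z ∈ B,
        (G.induce B).Reachable a ⟨z, hzB⟩ := by
      intro z hz
      induction hz with
      | refl => intro hzB; exact Reachable.refl _
      | tail _ hr ih =>
        intro hzB
        exact (ih hr.1).trans (Adj.reachable (by exact hr.2.2))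
    have := key b h b.2
    simpa using this

/-- Restricted reachability in an induced graph equals restricted reachability downstairs. -/
lemma rreach_induce_iff {G : SimpleGraph V} {Q : Set V} {T' : Set Q} (a b : Q) :
    RReach (G.induce Q) T' a b ↔ RReach G (Subtype.val '' T') a b := by
  constructor
  · intro h
    induction h with
    | refl => exact Relation.ReflTransGen.refl
    | tail _ hr ih =>
      exact Relation.ReflTransGen.tail ih
        ⟨⟨_, hr.1, rfl⟩, ⟨_, hr.2.1, rfl⟩, hr.2.2⟩
  · intro h
    have key : ∀ z (hz : RReach G (Subtype.val '' T') (a : V) z), ∀ hzQ : z ∈ Q,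
        (⟨z, hzQ⟩ : Q) ∈ T' → RReach (G.induce Q) T' a ⟨z, hzQ⟩ := by
      intro z hz
      induction hz with
      | refl => intro _ _; exact Relation.ReflTransGen.refl
      | @tail c d hcd hr ih =>
        intro hdQ hdT
        obtain ⟨⟨c', hc'T, rfl⟩, ⟨d', hd'T, hd'⟩, hadj⟩ := hr
        have h1 := ih c'.2 (by simpa using hc'T)
        have : Rrel (G.induce Q) T' c' ⟨d, hdQ⟩ := by
          refine ⟨by simpa using hc'T, hdT, ?_⟩
          show G.Adj _ _
          simpa [hd'] using hadj
        exact Relation.ReflTransGen.tail (by simp at h1; exact h1) this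
    rcases Relation.ReflTransGen.cases_tail h with he | ⟨c, _, hc⟩
    · have : a = b := Subtype.ext he.symm
      rw [this]; exact Relation.ReflTransGen.refl
    · have hbT : b ∈ T' := by
        rcases hc.2.1 with ⟨b', hb', hbe⟩
        have : b' = b := Subtype.ext hbe
        rwa [this] at hb'
      have := key b h b.2 (by simpa using hbT)
      simpa using this

def Robust' (G : SimpleGraph V) (A : Set V) (α : ℤ) : Prop :=
  α ≤ (A.ncard : ℤ) ∧ ∀ x ∈ A, ∀ y ∈ A, y ≠ x →
    α - 1 ≤ ((Rcomp G (A \ {x}) y).ncard : ℤ)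

lemma image_ne_set {A : Set V} (v : A) :
    Subtype.val '' {u : A | u ≠ v} = A \ {(v : V)} := by
  ext z
  constructor
  · rintro ⟨u, hu, rfl⟩
    exact ⟨u.2, fun hz => hu (Subtype.ext hz)⟩
  · rintro ⟨hzA, hzv⟩
    exact ⟨⟨z, hzA⟩, fun he => hzv (congrArg Subtype.val he), rfl⟩

lemma supp_image {G : SimpleGraph V} {A : Set V} (v : A)
    (u : {u : A | u ≠ v}) :
    (fun (w : {u : A | u ≠ v}) => ((w : A) : V)) ''
      (SimpleGraph.ConnectedComponent.supp
        (((G.induce A).induce {u | u ≠ v}).connectedComponentMk u))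
      = Rcomp G (A \ {(v : V)}) ((u : A) : V) := by
  ext z
  simp only [Set.mem_image, ConnectedComponent.mem_supp_iff,
    ConnectedComponent.eq]
  constructor
  · rintro ⟨w, hw, rfl⟩
    have h2 : RReach G (Subtype.val '' ({u : A | u ≠ v} : Set A)) ((w : A) : V) ((u : A) : V) :=
      (rreach_induce_iff _ _).mp ((reach_induce_iff w u).mp hw)
    rw [image_ne_set] at h2
    exact h2.symm'
  · intro hz
    have hzmem : z ∈ A \ {(v : V)} := by
      rcases Relation.ReflTransGen.cases_tail hz with he | ⟨c, _, hc⟩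
      · rw [he]
        exact ⟨(u : A).2, fun h => u.2 (Subtype.ext h)⟩
      · exact hc.2.1
    refine ⟨⟨⟨z, hzmem.1⟩, fun h => hzmem.2 (congrArg Subtype.val h)⟩, ?_, rfl⟩
    apply (reach_induce_iff _ _).mpr
    apply (rreach_induce_iff (G := G) _ _).mpr
    rw [image_ne_set]
    exact hz.symm'

lemma robust_iff (G : SimpleGraph V) (A : Set V) (α : ℤ) :
    IsRobustGraph (G.induce A) α ↔ Robust' G A α := by
  have hcard : ((Set.univ : Set A).ncard : ℤ) = (A.ncard : ℤ) := by
    rw [Set.ncard_univ, Nat.card_coe_set_eq]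
  have hinj : ∀ v : A, Function.Injective
      (fun (w : {u : A | u ≠ v}) => ((w : A) : V)) := by
    intro v w w' h
    exact Subtype.ext (Subtype.ext h)
  constructor
  · rintro ⟨h1, h2⟩
    refine ⟨hcard ▸ h1, ?_⟩
    intro x hx y hy hyx
    set v : A := ⟨x, hx⟩
    set u : {u : A | u ≠ v} := ⟨⟨y, hy⟩, fun h => hyx (congrArg Subtype.val h)⟩
    have := h2 v (((G.induce A).induce {u | u ≠ v}).connectedComponentMk u)
    rw [← Set.ncard_image_of_injective _ (hinj v), supp_image v u] at this
    exact this
  · rintro ⟨h1, h2⟩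
    refine ⟨hcard ▸ h1, ?_⟩
    intro v C
    obtain ⟨u, rfl⟩ := C.exists_rep
    have hne : ((u : A) : V) ≠ (v : V) := fun h => u.2 (Subtype.ext h)
    have := h2 (v : V) v.2 ((u : A) : V) (u : A).2 hne
    rw [← supp_image v u, Set.ncard_image_of_injective _ (hinj v)] at this
    exact this


lemma Rcomp_avoid {G : SimpleGraph V} {T : Set V} {y x : V} (hx : x ∉ Rcomp G T y) :
    Rcomp G T y ⊆ Rcomp G (T \ {x}) y := by
  intro z hz
  induction hz with
  | refl => exact Relation.ReflTransGen.refl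
  | @tail b c hyb hbc ih =>
    have hbmem : b ∈ Rcomp G T y := hyb
    have hcmem : c ∈ Rcomp G T y := Relation.ReflTransGen.tail hyb hbc
    refine Relation.ReflTransGen.tail ih ?_
    exact ⟨⟨hbc.1, fun h => hx (h ▸ hbmem)⟩, ⟨hbc.2.1, fun h => hx (h ▸ hcmem)⟩, hbc.2.2⟩

lemma Rcomp_ncard_of_robust [Finite V] {G : SimpleGraph V} {A : Set V} {α : ℤ}
    (h : Robust' G A α) {y : V} (hy : y ∈ A) : α - 1 ≤ ((Rcomp G A y).ncard : ℤ) := by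
  by_cases hA : A ⊆ Rcomp G A y
  · have h1 : A.ncard ≤ (Rcomp G A y).ncard := Set.ncard_le_ncard hA (Set.toFinite _)
    have := h.1
    omega
  · obtain ⟨x, hxA, hxc⟩ := Set.not_subset.mp hA
    have hyx : y ≠ x := fun h => hxc (h ▸ self_mem_Rcomp G A y)
    have h2 := h.2 x hxA y hy hyx
    have h3 : (Rcomp G (A \ {x}) y).ncard ≤ (Rcomp G A y).ncard :=
      Set.ncard_le_ncard (Rcomp_mono (Set.diff_subset) y) (Set.toFinite _)
    omega

lemma robust_pruneSet [Finite W'] (H : SimpleGraph W') (α : ℤ)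
    (hne : (pruneSet H α).Nonempty) : Robust' H (pruneSet H α) α := by
  have hsub : ∀ A : Set W', Robust' H A α → A ⊆ pruneSet H α := by
    intro A hA a ha
    exact ⟨A, (robust_iff H A α).mpr hA, ha⟩
  constructor
  · obtain ⟨w, A, hA, hwA⟩ := hne
    have hA' := (robust_iff H A α).mp hA
    have := Set.ncard_le_ncard (hsub A hA') (Set.toFinite _)
    have := hA'.1
    omega
  · intro x hx y hy hyx
    obtain ⟨A, hA, hyA⟩ := hy
    have hA' := (robust_iff H A α).mp hA
    have hAP : A ⊆ pruneSet H α := hsub A hA'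
    by_cases hxA : x ∈ A
    · have h1 := hA'.2 x hxA y hyA hyx
      have h2 : (Rcomp H (A \ {x}) y).ncard ≤ (Rcomp H (pruneSet H α \ {x}) y).ncard :=
        Set.ncard_le_ncard (Rcomp_mono (Set.diff_subset_diff_left hAP) y) (Set.toFinite _)
      omega
    · have h1 := Rcomp_ncard_of_robust hA' hyA
      have hsub2 : A ⊆ pruneSet H α \ {x} := fun a ha => ⟨hAP ha, fun h => hxA (h ▸ ha)⟩
      have h2 : (Rcomp H A y).ncard ≤ (Rcomp H (pruneSet H α \ {x}) y).ncard :=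
        Set.ncard_le_ncard (Rcomp_mono hsub2 y) (Set.toFinite _)
      omega

lemma rreach_of_connected {G : SimpleGraph V} {T : Set V} (h : (G.induce T).Connected)
    {a b : V} (ha : a ∈ T) (hb : b ∈ T) : RReach G T a b :=
  (reach_induce_iff ⟨a, ha⟩ ⟨b, hb⟩).mp (h.preconnected _ _)

lemma connected_induce_induce {G : SimpleGraph V} {Q T : Set V} (hTQ : T ⊆ Q)
    (h : (G.induce T).Connected) :
    ((G.induce Q).induce (Subtype.val ⁻¹' T)).Connected := by
  have hne : T.Nonempty := Set.nonempty_coe_sort.mp h.nonempty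
  rw [SimpleGraph.connected_iff]
  constructor
  · intro a b
    apply (reach_induce_iff a b).mpr
    have himg : Subtype.val '' (Subtype.val ⁻¹' T : Set Q) = T := by
      rw [Subtype.image_preimage_coe, Set.inter_eq_self_of_subset_right hTQ]
    refine (rreach_induce_iff (G := G) (Q := Q) (T' := Subtype.val ⁻¹' T) a b).mpr ?_
    rw [himg]
    exact rreach_of_connected h a.2 b.2
  · obtain ⟨t, ht⟩ := hne
    exact ⟨⟨⟨t, hTQ ht⟩, ht⟩⟩

lemma robust_image {W' : Type*} [Finite V] [Finite W'] {H : SimpleGraph W'}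
    {G : SimpleGraph V} {α : ℤ} {B : Set W'} (hB : Robust' H B α)
    {φ : W' → Set V} (hφ : IsMinorModel G H φ) :
    ∃ ψ : B → Set V, IsMinorModel G (H.induce B) ψ ∧ Robust' G (⋃ u, ψ u) α := by
  classical
  obtain ⟨hconn0, hadj0, hdisj0⟩ := hφ
  have hmodel0 : IsMinorModel G (H.induce B) (fun u : B => φ u) :=
    ⟨fun u => hconn0 _, fun u w h => hadj0 _ _ h,
     fun u w h => hdisj0 _ _ (fun he => h (Subtype.ext he))⟩
  obtain ⟨n₀, ⟨ψ, hψ, hn₀⟩, hmin⟩ := Nat.lt_wfRel.wf.has_min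
    {n | ∃ ψ : B → Set V, IsMinorModel G (H.induce B) ψ ∧ (⋃ u, ψ u).ncard = n}
    ⟨_, _, hmodel0, rfl⟩
  refine ⟨ψ, hψ, ?_⟩
  obtain ⟨hψconn, hψadj, hψdisj⟩ := hψ
  set S := ⋃ u, ψ u with hSdef
  have hnonempty : ∀ u, (ψ u).Nonempty := fun u =>
    Set.nonempty_coe_sort.mp (hψconn u).nonempty
  choose pick hpick using hnonempty
  have hsub : ∀ u, ψ u ⊆ S := fun u => Set.subset_iUnion ψ u
  have hreach : ∀ u, ∀ a ∈ ψ u, ∀ b ∈ ψ u, RReach G (ψ u) a b :=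
    fun u a ha b hb => rreach_of_connected (hψconn u) ha hb
  constructor
  · -- cardinality: α ≤ |S|
    have hinj : Function.Injective (fun u : B => (⟨pick u, hsub u (hpick u)⟩ : S)) := by
      intro u w h
      by_contra hne
      have hd := hψdisj u w hne
      have h1 : pick u = pick w := congrArg Subtype.val h
      exact Set.disjoint_left.mp hd (hpick u) (h1 ▸ hpick w)
    have h1 : B.ncard ≤ S.ncard := by
      rw [← Nat.card_coe_set_eq, ← Nat.card_coe_set_eq]
      exact Nat.card_le_card_of_injective _ hinj
    have h2 := hB.1
    omega
  · intro x hx y hy hyx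
    obtain ⟨v, hxv⟩ := Set.mem_iUnion.mp hx
    set C := Rcomp G (S \ {x}) y with hCdef
    have hyS : y ∈ S \ {x} := ⟨hy, hyx⟩
    have hyC : y ∈ C := self_mem_Rcomp G _ y
    have hCS : C ⊆ S \ {x} := Rcomp_subset hyS
    -- Claim A: a branch set other than ψ v touching C lies in C
    have claimA : ∀ u : B, u ≠ v → ∀ a ∈ ψ u, a ∈ C → ψ u ⊆ C := by
      intro u huv a ha haC b hb
      have h2 : ψ u ⊆ S \ {x} := fun z hz =>
        ⟨hsub u hz, fun he => Set.disjoint_left.mp (hψdisj u v huv) hz (by rw [← he] at hxv; exact hxv)⟩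
      exact Relation.ReflTransGen.trans haC ((hreach u a ha b hb).mono h2)
    -- Step 1: some branch set other than ψ v is inside C
    have step1 : ∃ u : B, u ≠ v ∧ ψ u ⊆ C := by
      obtain ⟨u₀, hyu₀⟩ := Set.mem_iUnion.mp hy
      by_cases hu₀v : u₀ = v
      · subst hu₀v
        set D := Rcomp G (ψ u₀ \ {x}) y with hDdef
        have hyD : y ∈ D := self_mem_Rcomp G _ y
        have hDsub : D ⊆ ψ u₀ \ {x} := Rcomp_subset ⟨hyu₀, hyx⟩
        have hDC : D ⊆ C :=
          Rcomp_mono (show ψ u₀ \ {x} ⊆ S \ {x} from fun z hz => ⟨hsub u₀ hz.1, hz.2⟩) y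
        set ψ' : B → Set V := Function.update ψ u₀ (ψ u₀ \ D) with hψ'def
        have hval1 : ψ' u₀ = ψ u₀ \ D := by rw [hψ'def]; exact Function.update_self _ _ _
        have hval2 : ∀ u, u ≠ u₀ → ψ' u = ψ u := fun u h => by
          rw [hψ'def]; exact Function.update_of_ne h _ _
        have hψ'sub : ∀ u, ψ' u ⊆ ψ u := by
          intro u
          by_cases h : u = u₀
          · rw [h, hval1]; exact Set.diff_subset
          · rw [hval2 u h]
        have hxD : x ∉ D := fun h => (hDsub h).2 rfl
        have hxψ' : x ∈ ψ u₀ \ D := ⟨hxv, hxD⟩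
        -- connectivity of ψ u₀ \ D
        have key : ∀ z, RReach G (ψ u₀) z x → z ∉ D → RReach G (ψ u₀ \ D) z x := by
          intro z hzx
          induction hzx using Relation.ReflTransGen.head_induction_on with
          | refl => intro _; exact Relation.ReflTransGen.refl
          | head hcb hbx ih =>
            rename_i c b
            intro hcD
            by_cases hbD : b ∈ D
            · by_cases hcx : c = x
              · rw [hcx]
                exact Relation.ReflTransGen.refl
              · exfalso
                apply hcD
                exact Rcomp_closed hbD ⟨hDsub hbD, ⟨hcb.1, hcx⟩, hcb.2.2.symm⟩
            · exact Relation.ReflTransGen.head ⟨⟨hcb.1, hcD⟩, ⟨hcb.2.1, hbD⟩, hcb.2.2⟩ (ih hbD)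
        have hψ'conn : ∀ u, (G.induce (ψ' u)).Connected := by
          intro u
          by_cases h : u = u₀
          · rw [h, hval1]
            rw [SimpleGraph.connected_iff]
            constructor
            · intro a b
              apply (reach_induce_iff a b).mpr
              have hax : RReach G (ψ u₀ \ D) (a : V) x :=
                key a (hreach u₀ a a.2.1 x hxv) a.2.2
              have hbx : RReach G (ψ u₀ \ D) (b : V) x :=
                key b (hreach u₀ b b.2.1 x hxv) b.2.2
              exact Relation.ReflTransGen.trans hax hbx.symm'
            · exact ⟨⟨x, hxψ'⟩⟩
          · rw [hval2 u h]
            exact hψconn u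
        have hψ'disj : ∀ u w : B, u ≠ w → Disjoint (ψ' u) (ψ' w) :=
          fun u w h => (hψdisj u w h).mono (hψ'sub u) (hψ'sub w)
        -- ψ' is strictly smaller
        have hm : (⋃ u, ψ' u).ncard < S.ncard := by
          have h1 : (⋃ u, ψ' u) ⊆ S :=
            Set.iUnion_subset fun u => (hψ'sub u).trans (hsub u)
          have h3 : y ∉ ⋃ u, ψ' u := by
            intro hmem
            obtain ⟨u, hu⟩ := Set.mem_iUnion.mp hmem
            by_cases h : u = u₀
            · rw [h, hval1] at hu
              exact hu.2 hyD
            · rw [hval2 u h] at hu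
              exact Set.disjoint_left.mp (hψdisj u u₀ h) hu hyu₀
          exact Set.ncard_lt_ncard ((Set.ssubset_iff_of_subset h1).mpr ⟨y, hy, h3⟩)
            (Set.toFinite _)
        -- ψ' is not a model, so an adjacency fails
        have hnotmodel : ¬ IsMinorModel G (H.induce B) ψ' := by
          intro hmod
          exact hmin _ ⟨ψ', hmod, rfl⟩ (hn₀ ▸ hm)
        have hfail : ∃ u w : B, (H.induce B).Adj u w ∧
            ∀ a ∈ ψ' u, ∀ b ∈ ψ' w, ¬ G.Adj a b := by
          by_contra hcon
          push_neg at hcon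
          apply hnotmodel
          refine ⟨hψ'conn, ?_, hψ'disj⟩
          intro u w h
          obtain ⟨a, ha, b, hb, hab⟩ := hcon u w h
          exact ⟨a, ha, b, hb, hab⟩
        obtain ⟨u, w, huw, hnedge⟩ := hfail
        -- produce u' ≠ u₀ adjacent with an edge into D
        have hmain : ∃ u' : B, u' ≠ u₀ ∧ ∃ a ∈ ψ u', ∃ b ∈ D, G.Adj a b := by
          have hv : u = u₀ ∨ w = u₀ := by
            by_contra hc
            push_neg at hc
            obtain ⟨a, ha, b, hb, hab⟩ := hψadj u w huw
            refine hnedge a ?_ b ?_ hab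
            · rw [hval2 u hc.1]; exact ha
            · rw [hval2 w hc.2]; exact hb
          rcases hv with rfl | rfl
          · -- u = u₀, partner is w
            have hwv : w ≠ u := huw.ne'
            obtain ⟨a, ha, b, hb, hab⟩ := hψadj u w huw
            by_cases haD : a ∈ D
            · exact ⟨w, hwv, b, hb, a, haD, hab.symm⟩
            · exfalso
              refine hnedge a ?_ b ?_ hab
              · rw [hval1]; exact ⟨ha, haD⟩
              · rw [hval2 w hwv]; exact hb
          · -- w = u₀
            have huv' : u ≠ w := huw.ne
            obtain ⟨a, ha, b, hb, hab⟩ := hψadj u w huw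
            by_cases hbD : b ∈ D
            · exact ⟨u, huv', a, ha, b, hbD, hab⟩
            · exfalso
              refine hnedge a ?_ b ?_ hab
              · rw [hval2 u huv']; exact ha
              · rw [hval1]; exact ⟨hb, hbD⟩
        obtain ⟨u', hu'v, a, ha, b, hbD, hab⟩ := hmain
        have hbC : b ∈ C := hDC hbD
        have haS : a ∈ S \ {x} := ⟨hsub u' ha, fun he =>
          Set.disjoint_left.mp (hψdisj u' u₀ hu'v) ha (by rw [← he] at hxv; exact hxv)⟩
        have hbS : b ∈ S \ {x} := hCS hbC
        have haC : a ∈ C := Rcomp_closed hbC ⟨hbS, haS, hab.symm⟩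
        exact ⟨u', hu'v, claimA u' hu'v a ha haC⟩
      · exact ⟨u₀, hu₀v, claimA u₀ hu₀v y hyu₀ hyC⟩
    obtain ⟨u, huv, hψuC⟩ := step1
    -- Step 2: branch sets over the H-component of u are inside C
    have step2 : ∀ z, RReach H (B \ {(v : W')}) (u : W') z →
        ∃ hz : z ∈ B, ψ ⟨z, hz⟩ ⊆ C := by
      intro z hz
      induction hz with
      | refl => exact ⟨u.2, hψuC⟩
      | tail hb hbc ih =>
        rename_i b c
        obtain ⟨hbB, hψb⟩ := ih
        have hcB : c ∈ B := hbc.2.1.1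
        have hcv : c ≠ (v : W') := hbc.2.1.2
        have hcvB : (⟨c, hcB⟩ : B) ≠ v := fun h => hcv (congrArg Subtype.val h)
        have hadjBC : (H.induce B).Adj ⟨b, hbB⟩ ⟨c, hcB⟩ := hbc.2.2
        obtain ⟨a, ha, b', hb', hab⟩ := hψadj _ _ hadjBC
        have haC : a ∈ C := hψb ha
        have haS : a ∈ S \ {x} := hCS haC
        have hb'S : b' ∈ S \ {x} := ⟨hsub _ hb', fun he =>
          Set.disjoint_left.mp (hψdisj _ v hcvB) hb' (by rw [← he] at hxv; exact hxv)⟩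
        have hb'C : b' ∈ C := Rcomp_closed haC ⟨haS, hb'S, hab⟩
        exact ⟨hcB, claimA ⟨c, hcB⟩ hcvB b' hb' hb'C⟩
    -- Step 3: cardinality bound
    have huv' : (u : W') ≠ (v : W') := fun h => huv (Subtype.ext h)
    have hK := hB.2 (v : W') v.2 (u : W') u.2 huv'
    have hcard : (Rcomp H (B \ {(v : W')}) (u : W')).ncard ≤ C.ncard := by
      classical
      refine Set.ncard_le_ncard_of_injOn
        (fun z => if hz : z ∈ B then pick ⟨z, hz⟩ else y) ?_ ?_ (Set.toFinite _)
      · intro z hzK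
        obtain ⟨hzB, hψz⟩ := step2 z hzK
        simp only [dif_pos hzB]
        exact hψz (hpick ⟨z, hzB⟩)
      · intro z hzK z' hz'K heq
        obtain ⟨hzB, _⟩ := step2 z hzK
        obtain ⟨hz'B, _⟩ := step2 z' hz'K
        simp only [dif_pos hzB, dif_pos hz'B] at heq
        by_contra hne
        have hneB : (⟨z, hzB⟩ : B) ≠ ⟨z', hz'B⟩ := fun h => hne (congrArg Subtype.val h)
        exact Set.disjoint_left.mp (hψdisj _ _ hneB) (hpick ⟨z, hzB⟩)
          (heq ▸ hpick ⟨z', hz'B⟩)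
    omega

end Aux

/-- If `H` is a minor of `G` then `αprune(H)` is a minor of `αprune(G)`. -/
theorem stmt_7 {V W : Type*} [Fintype V] [Fintype W]
    (H : SimpleGraph W) (G : SimpleGraph V) (α : ℤ)
    (h : IsMinorOf H G) :
    IsMinorOf (prune H α) (prune G α) := by
  obtain ⟨φ, hφ⟩ := h
  by_cases hP : (pruneSet H α).Nonempty
  · have hrob := robust_pruneSet H α hP
    obtain ⟨ψ, hψ, hS⟩ := robust_image hrob hφ
    have hSsub : (⋃ u, ψ u) ⊆ pruneSet G α := fun z hz =>
      ⟨⋃ u, ψ u, (robust_iff G (⋃ u, ψ u) α).mpr hS, hz⟩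
    refine ⟨fun u => Subtype.val ⁻¹' (ψ u), ?_, ?_, ?_⟩
    · intro u
      exact connected_induce_induce
        (fun z hz => hSsub (Set.subset_iUnion ψ u hz)) (hψ.1 u)
    · intro u w huw
      obtain ⟨a, ha, b, hb, hab⟩ := hψ.2.1 u w huw
      exact ⟨⟨a, hSsub (Set.subset_iUnion ψ u ha)⟩, ha,
        ⟨b, hSsub (Set.subset_iUnion ψ w hb)⟩, hb, hab⟩
    · intro u w huw
      have hd := hψ.2.2 u w huw
      rw [Set.disjoint_left] at hd ⊢
      intro z hz hz'
      exact hd hz hz'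
  · rw [Set.not_nonempty_iff_eq_empty] at hP
    have hempty : IsEmpty (pruneSet H α : Set W) := Set.isEmpty_coe_sort.mpr hP
    exact ⟨fun u => isEmptyElim u, fun u => isEmptyElim u,
      fun u => isEmptyElim u, fun u => isEmptyElim u⟩
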